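/- Let G be the standard Gaussian CDF, b_n defined by 1 - G(b_n) = 1/n, and a_n = 1/b_n. Then for all x ∈ ℝ, lim_{n→∞} n·(1 - G(a_n x + b_n)) = e^{-x}. -/

import Mathlib

open MeasureTheory Filter Topology Real Set

noncomputable def gpdf (s : ℝ) : ℝ := (Real.sqrt (2 * Real.pi))⁻¹ * Real.exp (-s ^ 2 / 2)

lemma gpdf_pos (s : ℝ) : 0 < gpdf s := by
  unfold gpdf
  have : (0:ℝ) < Real.sqrt (2 * Real.pi) := Real.sqrt_pos.2 (by positivity)
  positivity

lemma gpdf_eq (s : ℝ) : gpdf s = (Real.sqrt (2 * Real.pi))⁻¹ * Real.exp (-(1/2) * s ^ 2) := by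
  unfold gpdf; congr 1; congr 1; ring

lemma integrable_gpdf : Integrable gpdf := by
  have h := (integrable_exp_neg_mul_sq (by norm_num : (0:ℝ) < 1/2)).const_mul
    (Real.sqrt (2 * Real.pi))⁻¹
  refine h.congr ?_
  filter_upwards with s
  rw [gpdf_eq]

lemma integral_gpdf : ∫ s, gpdf s = 1 := by
  have h1 : ∫ s, gpdf s = (Real.sqrt (2 * Real.pi))⁻¹ * ∫ s : ℝ, Real.exp (-(1/2) * s ^ 2) := by
    rw [← integral_const_mul]
    exact integral_congr_ae (Eventually.of_forall fun s => gpdf_eq s)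
  rw [h1, integral_gaussian]
  have : Real.pi / (1/2) = 2 * Real.pi := by ring
  rw [this]
  have h2 : (0:ℝ) < Real.sqrt (2 * Real.pi) := Real.sqrt_pos.2 (by positivity)
  field_simp

noncomputable def gtail (t : ℝ) : ℝ := ∫ s in Set.Ioi t, gpdf s

lemma gtail_pos (t : ℝ) : 0 < gtail t := by
  unfold gtail
  rw [setIntegral_pos_iff_support_of_nonneg_ae
    (Eventually.of_forall fun s => (gpdf_pos s).le) integrable_gpdf.integrableOn]
  have hs : Function.support gpdf = Set.univ := by
    ext s; simp [Function.mem_support, (gpdf_pos s).ne']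
  rw [hs, Set.univ_inter]
  simp [Real.volume_Ioi]

lemma gtail_anti : Antitone gtail := by
  intro s t hst
  exact setIntegral_mono_set integrable_gpdf.integrableOn
    (Eventually.of_forall fun u => (gpdf_pos u).le)
    (HasSubset.Subset.eventuallyLE (Set.Ioi_subset_Ioi hst))

lemma hasDerivAt_negexp (u : ℝ) :
    HasDerivAt (fun v : ℝ => -Real.exp (-v ^ 2 / 2)) (u * Real.exp (-u ^ 2 / 2)) u := by
  have h1 : HasDerivAt (fun v : ℝ => -v ^ 2 / 2) (-u) u := by
    have := ((hasDerivAt_pow 2 u).div_const 2).neg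
    refine HasDerivAt.congr_of_eventuallyEq (this.congr_deriv ?_) (Eventually.of_forall fun v => ?_)
    · ring
    · simp only [Pi.neg_apply]; ring
  have h2 := (h1.exp).neg
  refine h2.congr_deriv ?_
  ring

lemma tendsto_exp_neg_sq : Tendsto (fun u : ℝ => Real.exp (-u ^ 2 / 2)) atTop (𝓝 0) := by
  apply Real.tendsto_exp_atBot.comp
  have h1 : Tendsto (fun u : ℝ => u ^ 2 / 2) atTop atTop :=
    (tendsto_pow_atTop two_ne_zero).atTop_div_const (by norm_num)
  simpa [neg_div] using tendsto_neg_atBot_iff.mpr h1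

lemma integral_id_mul_exp {t : ℝ} (ht : 0 ≤ t) :
    ∫ u in Set.Ioi t, u * Real.exp (-u ^ 2 / 2) = Real.exp (-t ^ 2 / 2) := by
  have h := integral_Ioi_of_hasDerivAt_of_nonneg'
    (g := fun v : ℝ => -Real.exp (-v ^ 2 / 2))
    (g' := fun u : ℝ => u * Real.exp (-u ^ 2 / 2))
    (fun u hu => hasDerivAt_negexp u)
    (fun u hu => mul_nonneg (ht.trans hu.out.le) (Real.exp_nonneg _))
    (by simpa using tendsto_exp_neg_sq.neg)
  rw [h]; norm_num

lemma integrableOn_id_mul_exp {t : ℝ} (ht : 0 ≤ t) :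
    IntegrableOn (fun u : ℝ => u * Real.exp (-u ^ 2 / 2)) (Set.Ioi t) := by
  exact integrableOn_Ioi_deriv_of_nonneg'
    (g := fun v : ℝ => -Real.exp (-v ^ 2 / 2))
    (fun u hu => hasDerivAt_negexp u)
    (fun u hu => mul_nonneg (ht.trans hu.out.le) (Real.exp_nonneg _))
    (by simpa using tendsto_exp_neg_sq.neg)

lemma mills_upper {t : ℝ} (ht : 0 < t) : gtail t ≤ gpdf t / t := by
  have key : gtail t ≤ ∫ u in Set.Ioi t, (u / t) * gpdf u := by
    unfold gtail
    apply setIntegral_mono_on integrable_gpdf.integrableOn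
    · have : IntegrableOn (fun u : ℝ => (Real.sqrt (2 * Real.pi))⁻¹ / t *
          (u * Real.exp (-u ^ 2 / 2))) (Set.Ioi t) :=
        (integrableOn_id_mul_exp ht.le).const_mul _
      refine this.congr_fun ?_ measurableSet_Ioi
      intro u hu; unfold gpdf; field_simp
    · exact measurableSet_Ioi
    · intro u hu
      have h1 : 1 ≤ u / t := (one_le_div ht).2 hu.out.le
      nlinarith [gpdf_pos u]
  have h2 : ∫ u in Set.Ioi t, (u / t) * gpdf u
      = (Real.sqrt (2 * Real.pi))⁻¹ / t * Real.exp (-t ^ 2 / 2) := by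
    rw [← integral_id_mul_exp ht.le, ← integral_const_mul]
    apply setIntegral_congr_fun measurableSet_Ioi
    intro u hu; unfold gpdf; field_simp
  refine le_trans key (le_of_eq ?_)
  rw [h2]; unfold gpdf; ring

lemma continuous_gpdf : Continuous gpdf := by
  unfold gpdf; fun_prop

lemma tendsto_gpdf : Tendsto gpdf atTop (𝓝 0) := by
  have h := tendsto_exp_neg_sq.const_mul (Real.sqrt (2 * Real.pi))⁻¹
  rw [mul_zero] at h
  exact h

lemma hasDerivAt_L (u : ℝ) :
    HasDerivAt (fun v : ℝ => gpdf v * v / (v ^ 2 + 1))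
      (gpdf u * ((1 - 2 * u ^ 2 - u ^ 4) / (u ^ 2 + 1) ^ 2)) u := by
  have h1 : HasDerivAt (fun v : ℝ => -v ^ 2 / 2) (-u) u := by
    have := ((hasDerivAt_pow 2 u).div_const 2).neg
    refine HasDerivAt.congr_of_eventuallyEq (this.congr_deriv ?_) (Eventually.of_forall fun v => ?_)
    · ring
    · simp only [Pi.neg_apply]; ring
  have hexp := h1.exp
  have hA := hexp.mul (hasDerivAt_id u)
  have hD : HasDerivAt (fun v : ℝ => v ^ 2 + 1) (2 * u) u := by
    simpa using (hasDerivAt_pow 2 u).add_const 1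
  have hne : (u : ℝ) ^ 2 + 1 ≠ 0 := by positivity
  have hdiv := (hA.div hD hne).const_mul (Real.sqrt (2 * Real.pi))⁻¹
  have heq : (fun v : ℝ => gpdf v * v / (v ^ 2 + 1))
      = fun v : ℝ => (Real.sqrt (2 * Real.pi))⁻¹ * (Real.exp (-v ^ 2 / 2) * v / (v ^ 2 + 1)) := by
    funext v; unfold gpdf; ring
  rw [heq]
  refine hdiv.congr_deriv ?_
  unfold gpdf; simp only [Pi.mul_apply, id]
  field_simp
  ring

lemma abs_ratio_le (u : ℝ) : |(1 - 2 * u ^ 2 - u ^ 4) / (u ^ 2 + 1) ^ 2| ≤ 1 := by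
  rw [abs_div, abs_of_pos (by positivity : (0:ℝ) < (u ^ 2 + 1) ^ 2), div_le_one (by positivity)]
  rw [abs_le]
  constructor <;> nlinarith [sq_nonneg u, sq_nonneg (u ^ 2)]

lemma mills_lower {t : ℝ} (ht : 0 < t) : gpdf t * t / (t ^ 2 + 1) ≤ gtail t := by
  set L' : ℝ → ℝ := fun u => gpdf u * ((1 - 2 * u ^ 2 - u ^ 4) / (u ^ 2 + 1) ^ 2) with hL'
  have hcont : Continuous L' := by
    apply continuous_gpdf.mul
    apply Continuous.div (by fun_prop) (by fun_prop)
    intro u; positivity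
  have hLint : IntegrableOn L' (Set.Ioi t) := by
    apply Integrable.mono (integrable_gpdf.integrableOn) hcont.aestronglyMeasurable.restrict
    filter_upwards with u
    rw [Real.norm_eq_abs, Real.norm_eq_abs, abs_mul, abs_of_pos (gpdf_pos u)]
    calc gpdf u * |(1 - 2 * u ^ 2 - u ^ 4) / (u ^ 2 + 1) ^ 2| ≤ gpdf u * 1 := by
          exact mul_le_mul_of_nonneg_left (abs_ratio_le u) (gpdf_pos u).le
      _ = gpdf u := mul_one _
  have hL0 : Tendsto (fun u : ℝ => gpdf u * u / (u ^ 2 + 1)) atTop (𝓝 0) := by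
    apply tendsto_of_tendsto_of_tendsto_of_le_of_le' tendsto_const_nhds tendsto_gpdf
    · filter_upwards [eventually_ge_atTop (0:ℝ)] with u hu
      have := gpdf_pos u
      positivity
    · filter_upwards [eventually_ge_atTop (0:ℝ)] with u hu
      rw [mul_div_assoc]
      calc gpdf u * (u / (u ^ 2 + 1)) ≤ gpdf u * 1 := by
            apply mul_le_mul_of_nonneg_left _ (gpdf_pos u).le
            rw [div_le_one (by positivity)]; nlinarith
        _ = gpdf u := mul_one _
  have key : ∫ u in Set.Ioi t, L' u = 0 - gpdf t * t / (t ^ 2 + 1) :=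
    integral_Ioi_of_hasDerivAt_of_tendsto' (fun u _ => hasDerivAt_L u) hLint hL0
  have h2 : (0:ℝ) ≤ ∫ u in Set.Ioi t, (gpdf u + L' u) := by
    apply setIntegral_nonneg measurableSet_Ioi
    intro u _
    have : gpdf u + L' u = gpdf u * (2 / (u ^ 2 + 1) ^ 2) := by
      rw [hL']; field_simp; ring
    rw [this]
    have := gpdf_pos u
    positivity
  rw [integral_add integrable_gpdf.integrableOn hLint, key] at h2
  have : gtail t = ∫ u in Set.Ioi t, gpdf u := rfl
  linarith [h2]

noncomputable def fUB (x t : ℝ) : ℝ :=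
  Real.exp (-x - x ^ 2 * t / 2) * ((1 + t) / (1 + x * t))

noncomputable def fLB (x t : ℝ) : ℝ :=
  Real.exp (-x - x ^ 2 * t / 2) *
    ((1 + x * t) / (1 + (2 * x + 1) * t + x ^ 2 * t ^ 2))

lemma c_ge_one {x b : ℝ} (hb : 1 + |x| ≤ b) : 1 ≤ b⁻¹ * x + b := by
  have hb0 : (0:ℝ) < b := lt_of_lt_of_le (by positivity) hb
  have key : b ≤ x + b ^ 2 := by nlinarith [abs_nonneg x, neg_abs_le x]
  have h2 : b⁻¹ * x + b = (x + b ^ 2) / b := by field_simp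
  rw [h2, le_div_iff₀ hb0]
  linarith

lemma exp_split (x b : ℝ) (hb0 : b ≠ 0) :
    Real.exp (-(b⁻¹ * x + b) ^ 2 / 2)
      = Real.exp (-x - x ^ 2 * (1 / b ^ 2) / 2) * Real.exp (-b ^ 2 / 2) := by
  rw [← Real.exp_add]
  congr 1
  field_simp
  ring

lemma ratio_upper {x b : ℝ} (hb : 1 + |x| ≤ b) :
    gtail (b⁻¹ * x + b) / gtail b ≤ fUB x (1 / b ^ 2) := by
  have hb0 : (0:ℝ) < b := lt_of_lt_of_le (by positivity) hb
  obtain ⟨c, hc⟩ : ∃ c : ℝ, c = b⁻¹ * x + b := ⟨_, rfl⟩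
  have hc1 : (1:ℝ) ≤ c := hc ▸ c_ge_one hb
  have hc0 : (0:ℝ) < c := lt_of_lt_of_le one_pos hc1
  rw [← hc]
  have h1 : gtail c ≤ gpdf c / c := mills_upper hc0
  have h2 : gpdf b * b / (b ^ 2 + 1) ≤ gtail b := mills_lower hb0
  have h3 : (0:ℝ) < gpdf b * b / (b ^ 2 + 1) := by
    have := gpdf_pos b; positivity
  have h4 : gtail c / gtail b ≤ (gpdf c / c) / (gpdf b * b / (b ^ 2 + 1)) := by
    apply div_le_div₀ _ h1 h3 h2
    have := gpdf_pos c
    positivity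
  refine h4.trans (le_of_eq ?_)
  have hd : 1 + x * (1 / b ^ 2) = c * b / b ^ 2 := by
    rw [hc]; field_simp; ring
  unfold fUB gpdf
  rw [hc, exp_split x b hb0.ne', ← hc, hd]
  have hKne : Real.sqrt (2 * Real.pi) ≠ 0 := (Real.sqrt_pos.2 (by positivity)).ne'
  field_simp

lemma ratio_lower {x b : ℝ} (hb : 1 + |x| ≤ b) :
    fLB x (1 / b ^ 2) ≤ gtail (b⁻¹ * x + b) / gtail b := by
  have hb0 : (0:ℝ) < b := lt_of_lt_of_le (by positivity) hb
  obtain ⟨c, hc⟩ : ∃ c : ℝ, c = b⁻¹ * x + b := ⟨_, rfl⟩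
  have hc1 : (1:ℝ) ≤ c := hc ▸ c_ge_one hb
  have hc0 : (0:ℝ) < c := lt_of_lt_of_le one_pos hc1
  rw [← hc]
  have h1 : gpdf c * c / (c ^ 2 + 1) ≤ gtail c := mills_lower hc0
  have h2 : gtail b ≤ gpdf b / b := mills_upper hb0
  have h4 : (gpdf c * c / (c ^ 2 + 1)) / (gpdf b / b) ≤ gtail c / gtail b :=
    div_le_div₀ (gtail_pos c).le h1 (gtail_pos b) h2
  refine le_trans (le_of_eq ?_) h4
  have hd : 1 + x * (1 / b ^ 2) = c * b / b ^ 2 := by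
    rw [hc]; field_simp; ring
  have hd2 : 1 + (2 * x + 1) * (1 / b ^ 2) + x ^ 2 * (1 / b ^ 2) ^ 2
      = (c ^ 2 + 1) / b ^ 2 := by
    rw [hc]; field_simp; ring
  unfold fLB gpdf
  rw [hc, exp_split x b hb0.ne', ← hc, hd, hd2]
  have hKne : Real.sqrt (2 * Real.pi) ≠ 0 := (Real.sqrt_pos.2 (by positivity)).ne'
  have hcc : (c:ℝ) ^ 2 + 1 ≠ 0 := by positivity
  field_simp

lemma tendsto_fUB (x : ℝ) : Tendsto (fUB x) (𝓝 0) (𝓝 (Real.exp (-x))) := by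
  have h : ContinuousAt (fUB x) 0 := by
    unfold fUB
    apply ContinuousAt.mul
    · exact (Real.continuous_exp.comp (by fun_prop)).continuousAt
    · apply ContinuousAt.div (by fun_prop) (by fun_prop)
      norm_num
  have h0 : fUB x 0 = Real.exp (-x) := by
    unfold fUB; norm_num
  simpa [h0] using h.tendsto

lemma tendsto_fLB (x : ℝ) : Tendsto (fLB x) (𝓝 0) (𝓝 (Real.exp (-x))) := by
  have h : ContinuousAt (fLB x) 0 := by
    unfold fLB
    apply ContinuousAt.mul
    · exact (Real.continuous_exp.comp (by fun_prop)).continuousAt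
    · apply ContinuousAt.div (by fun_prop) (by fun_prop)
      norm_num
  have h0 : fLB x 0 = Real.exp (-x) := by
    unfold fLB; norm_num
  simpa [h0] using h.tendsto

/-- With `b_n` defined by `1 - G(b_n) = 1/n` and `a_n = 1/b_n` for the standard
Gaussian CDF `G`, one has `n·(1 - G(a_n x + b_n)) → e^{-x}` for all `x`. -/
theorem gaussian_normalized_tail_limit
    (G : ℝ → ℝ)
    (hG : ∀ t : ℝ, G t = ∫ s in Set.Iic t, (Real.sqrt (2 * Real.pi))⁻¹ * Real.exp (-s ^ 2 / 2))
    (b : ℕ → ℝ) (hbpos : ∀ n : ℕ, 2 ≤ n → 0 < b n)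
    (hb : ∀ n : ℕ, 2 ≤ n → 1 - G (b n) = 1 / n)
    (a : ℕ → ℝ) (hab : ∀ n, a n = (b n)⁻¹) (x : ℝ) :
    Tendsto (fun n : ℕ => (n : ℝ) * (1 - G (a n * x + b n))) atTop
      (𝓝 (Real.exp (-x))) := by
  have hG' : ∀ t : ℝ, 1 - G t = gtail t := by
    intro t
    have hsplit := intervalIntegral.integral_Iic_add_Ioi (μ := volume) (b := t)
      integrable_gpdf.integrableOn integrable_gpdf.integrableOn
    rw [integral_gpdf] at hsplit
    have hGt : G t = ∫ s in Set.Iic t, gpdf s := hG t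
    unfold gtail
    linarith [hsplit, hGt]
  -- b n → ∞
  have hbtop : Tendsto b atTop atTop := by
    rw [tendsto_atTop]
    intro M
    have h0 : Tendsto (fun n : ℕ => 1 / (n : ℝ)) atTop (𝓝 0) :=
      tendsto_one_div_atTop_nhds_zero_nat
    have hev : ∀ᶠ n : ℕ in atTop, 1 / (n : ℝ) < gtail M :=
      h0.eventually (eventually_lt_nhds (gtail_pos M)) |>.mono (fun n h => h)
    filter_upwards [hev, eventually_ge_atTop 2] with n h1 h2
    by_contra h
    push_neg at h
    have h3 : gtail M ≤ gtail (b n) := gtail_anti h.le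
    have h4 : gtail (b n) = 1 / n := by rw [← hG', hb n h2]
    rw [h4] at h3
    exact absurd (lt_of_lt_of_le h1 h3) (lt_irrefl _)
  have ht : Tendsto (fun n : ℕ => 1 / (b n) ^ 2) atTop (𝓝 0) := by
    have h1 : Tendsto (fun n : ℕ => (b n) ^ 2) atTop atTop :=
      (tendsto_pow_atTop two_ne_zero).comp hbtop
    simpa [one_div, Function.comp, Pi.inv_def] using h1.inv_tendsto_atTop
  have hU : Tendsto (fun n : ℕ => fUB x (1 / (b n) ^ 2)) atTop (𝓝 (Real.exp (-x))) :=
    (tendsto_fUB x).comp ht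
  have hL : Tendsto (fun n : ℕ => fLB x (1 / (b n) ^ 2)) atTop (𝓝 (Real.exp (-x))) :=
    (tendsto_fLB x).comp ht
  apply tendsto_of_tendsto_of_tendsto_of_le_of_le' hL hU
  · filter_upwards [eventually_ge_atTop 2, hbtop.eventually_ge_atTop (1 + |x|)] with n h2 hbn
    have hkey : (n : ℝ) * (1 - G (a n * x + b n))
        = gtail ((b n)⁻¹ * x + b n) / gtail (b n) := by
      rw [hab, hG']
      have h4 : gtail (b n) = 1 / n := by rw [← hG', hb n h2]
      rw [h4]
      have hn0 : (n : ℝ) ≠ 0 := Nat.cast_ne_zero.mpr (by omega)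
      field_simp
    rw [hkey]
    exact ratio_lower hbn
  · filter_upwards [eventually_ge_atTop 2, hbtop.eventually_ge_atTop (1 + |x|)] with n h2 hbn
    have hkey : (n : ℝ) * (1 - G (a n * x + b n))
        = gtail ((b n)⁻¹ * x + b n) / gtail (b n) := by
      rw [hab, hG']
      have h4 : gtail (b n) = 1 / n := by rw [← hG', hb n h2]
      rw [h4]
      have hn0 : (n : ℝ) ≠ 0 := Nat.cast_ne_zero.mpr (by omega)
      field_simp
    rw [hkey]
    exact ratio_upper hbn
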